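/- Let B ∈ ℝ^{m×n} have rank k, and let X ∈ ℝ^{m×n} be such that the matrix B Π_{row(X)} also has rank k, where Π_{row(X)} is the matrix of the orthogonal projection of ℝⁿ onto the row space of X. Then Π_{col(B Π_{row(X)})} · B = B; that is, one full sweep X ↦ Π_{col(B Π_{row(X)})} · B of the two-sided block power iteration recovers B exactly. -/

import Mathlib

open Matrix

/-- Matrix of the orthogonal projection of `ℝⁿ` onto the subspace `W`. -/
noncomputable def projMat {n : ℕ} (W : Submodule ℝ (EuclideanSpace ℝ (Fin n))) :
    Matrix (Fin n) (Fin n) ℝ :=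
  fun i j => (W.orthogonalProjection (EuclideanSpace.single j 1) : EuclideanSpace ℝ (Fin n)) i

/-- Column space of a matrix (its range as a linear map). -/
noncomputable def colSpace {m n : ℕ} (X : Matrix (Fin m) (Fin n) ℝ) :
    Submodule ℝ (EuclideanSpace ℝ (Fin m)) :=
  LinearMap.range (Matrix.toEuclideanLin X)

/-- Row space of a matrix. -/
noncomputable def rowSpace {m n : ℕ} (X : Matrix (Fin m) (Fin n) ℝ) :
    Submodule ℝ (EuclideanSpace ℝ (Fin n)) :=
  colSpace Xᵀ

lemma toEuclideanLin_projMat {n : ℕ} (W : Submodule ℝ (EuclideanSpace ℝ (Fin n)))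
    (v : EuclideanSpace ℝ (Fin n)) :
    Matrix.toEuclideanLin (projMat W) v = (W.orthogonalProjection v : EuclideanSpace ℝ (Fin n)) := by
  have : (W.subtype ∘ₗ (W.orthogonalProjection).toLinearMap) v
      = Matrix.toEuclideanLin (projMat W) v := by
    refine LinearMap.congr_fun (Module.Basis.ext (EuclideanSpace.basisFun (Fin n) ℝ).toBasis ?_) v
    intro j
    ext i
    simp [EuclideanSpace.basisFun_apply, Matrix.toEuclideanLin_apply, projMat]

  exact this.symm

lemma colSpace_mul_le {m n : ℕ} (A : Matrix (Fin m) (Fin n) ℝ) (M : Matrix (Fin n) (Fin n) ℝ) :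
    colSpace (A * M) ≤ colSpace A := by
  have h : Matrix.toEuclideanLin (A * M) =
      (Matrix.toEuclideanLin A).comp (Matrix.toEuclideanLin M) := by
    ext v i
    simp [Matrix.toEuclideanLin_apply, Matrix.mulVec_mulVec]
  rw [colSpace, h, LinearMap.range_comp]
  exact (LinearMap.map_le_range)

lemma rank_eq_finrank_colSpace {m n : ℕ} (A : Matrix (Fin m) (Fin n) ℝ) :
    A.rank = Module.finrank ℝ (colSpace A) := by
  have h : Matrix.toEuclideanLin A =
      ((WithLp.linearEquiv 2 ℝ (Fin m → ℝ)).symm.toLinearMap.comp A.mulVecLin).comp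
        (WithLp.linearEquiv 2 ℝ (Fin n → ℝ)).toLinearMap := rfl
  rw [Matrix.rank, colSpace, h, LinearMap.range_comp, LinearEquiv.range, Submodule.map_top,
    LinearMap.range_comp]
  exact (LinearEquiv.finrank_map_eq _ _).symm

/-- If `rank B = k` and `rank (B Π_{row(X)}) = k`, then one full sweep of the
two-sided block power iteration recovers `B` exactly:
`Π_{col(B Π_{row(X)})} ⬝ B = B`. -/
theorem stmt19 {m n k : ℕ} (B X : Matrix (Fin m) (Fin n) ℝ)
    (hB : B.rank = k) (hBX : (B * projMat (rowSpace X)).rank = k) :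
    projMat (colSpace (B * projMat (rowSpace X))) * B = B := by
  set W := colSpace (B * projMat (rowSpace X)) with hW
  have hle : W ≤ colSpace B := colSpace_mul_le _ _
  have heq : W = colSpace B := by
    apply Submodule.eq_of_le_of_finrank_eq hle
    rw [← rank_eq_finrank_colSpace, ← rank_eq_finrank_colSpace, hBX, hB]
  have hB_mem : ∀ v, Matrix.toEuclideanLin B v ∈ W := by
    intro v; rw [heq]; exact LinearMap.mem_range_self _ v
  apply Matrix.toEuclideanLin.injective
  ext v i
  have := toEuclideanLin_projMat W (Matrix.toEuclideanLin B v)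
  have hcomp : Matrix.toEuclideanLin (projMat W * B) v
      = Matrix.toEuclideanLin (projMat W) (Matrix.toEuclideanLin B v) := by
    simp [Matrix.toEuclideanLin_apply, Matrix.mulVec_mulVec]
  rw [hcomp, this, ← Submodule.starProjection_apply, Submodule.starProjection_eq_self_iff.mpr (hB_mem v)]
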